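/- Let A ∈ ℝ^{m×n}, a ∈ ℝ^m, b ∈ ℝ^n, c ∈ ℝ. For every υ > ‖a‖₂² + c there exist k ≥ 0 and λ ≥ 0 such that the block matrix [[I_m, a, A], [aᵀ, −c + υ − λr², −(1/2)bᵀ], [Aᵀ, −(1/2)b, (k+λ)I_n]] is positive semidefinite (one may take λ = 0). Equivalently, for any r > 0, whenever υ strictly exceeds the nominal value ‖a‖₂² + c there exists k ≥ 0 such that ‖Az + a‖₂² + bᵀz + c ≤ k·zᵀz + υ for all z with ‖z‖₂ ≤ r. -/

import Mathlib

open Matrix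

/-- The block matrix
`[[I_m, a, A], [aᵀ, −c + υ − λr², −(1/2)bᵀ], [Aᵀ, −(1/2)b, (k+λ)I_n]]`. -/
noncomputable def quadBlockMat {m n : ℕ} (A : Matrix (Fin m) (Fin n) ℝ) (a : Fin m → ℝ)
    (b : Fin n → ℝ) (c υ lam r k : ℝ) :
    Matrix (Fin m ⊕ (Unit ⊕ Fin n)) (Fin m ⊕ (Unit ⊕ Fin n)) ℝ :=
  Matrix.of fun i j =>
    match i, j with
    | Sum.inl i, Sum.inl j => if i = j then 1 else 0
    | Sum.inl i, Sum.inr (Sum.inl _) => a i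
    | Sum.inl i, Sum.inr (Sum.inr j) => A i j
    | Sum.inr (Sum.inl _), Sum.inl j => a j
    | Sum.inr (Sum.inl _), Sum.inr (Sum.inl _) => -c + υ - lam * r ^ 2
    | Sum.inr (Sum.inl _), Sum.inr (Sum.inr j) => -(1 / 2) * b j
    | Sum.inr (Sum.inr i), Sum.inl j => A j i
    | Sum.inr (Sum.inr i), Sum.inr (Sum.inl _) => -(1 / 2) * b i
    | Sum.inr (Sum.inr i), Sum.inr (Sum.inr j) => if i = j then k + lam else 0

private lemma cross_sum {m n : ℕ} (A : Matrix (Fin m) (Fin n) ℝ) (x : Fin m → ℝ)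
    (z : Fin n → ℝ) : ∑ j, z j * ∑ i, A i j * x i = ∑ i, x i * ∑ j, A i j * z j := by
  simp only [Finset.mul_sum]
  rw [Finset.sum_comm]
  apply Finset.sum_congr rfl; intro i _
  apply Finset.sum_congr rfl; intro j _
  ring

private lemma expand_sq_sum (m : ℕ) (x aa qq : Fin m → ℝ) (t : ℝ) :
    ∑ i, (x i + t * aa i + qq i) ^ 2 =
      ∑ i, x i ^ 2 + 2 * t * (∑ i, aa i * x i) + 2 * (∑ i, x i * qq i)
        + t ^ 2 * (∑ i, aa i ^ 2) + 2 * t * (∑ i, aa i * qq i)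
        + ∑ i, qq i ^ 2 := by
  simp only [Finset.mul_sum, ← Finset.sum_add_distrib]
  apply Finset.sum_congr rfl; intro i _; ring

private lemma expand_sq_sum' (m : ℕ) (aa qq : Fin m → ℝ) :
    ∑ i, (qq i + aa i) ^ 2 =
      ∑ i, qq i ^ 2 + 2 * (∑ i, aa i * qq i) + ∑ i, aa i ^ 2 := by
  simp only [Finset.mul_sum, ← Finset.sum_add_distrib]
  apply Finset.sum_congr rfl; intro i _; ring

private lemma split3 (m : ℕ) (x aa qq : Fin m → ℝ) (t : ℝ) :
    ∑ i, x i * (x i + t * aa i + qq i) =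
      ∑ i, x i ^ 2 + t * (∑ i, aa i * x i) + ∑ i, x i * qq i := by
  simp only [Finset.mul_sum, ← Finset.sum_add_distrib]
  apply Finset.sum_congr rfl; intro i _; ring

private lemma split_z (n : ℕ) (z bb cc : Fin n → ℝ) (t kk : ℝ) :
    ∑ j, z j * (cc j + -(1/2) * bb j * t + kk * z j) =
      ∑ j, z j * cc j + (-(1/2)) * t * (∑ j, bb j * z j) + kk * ∑ j, z j ^ 2 := by
  simp only [Finset.mul_sum, ← Finset.sum_add_distrib]
  apply Finset.sum_congr rfl; intro j _; ring

private lemma neg_half_sum (n : ℕ) (b z : Fin n → ℝ) :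
    ∑ j, -(1/2) * b j * z j = (-(1/2)) * ∑ j, b j * z j := by
  rw [Finset.mul_sum]
  apply Finset.sum_congr rfl; intro j _; ring

private lemma w_sum {m n : ℕ} (A : Matrix (Fin m) (Fin n) ℝ) (a : Fin m → ℝ)
    (b z : Fin n → ℝ) :
    ∑ j, (b j + 2 * ∑ i, a i * A i j) * z j
      = ∑ j, b j * z j + 2 * ∑ i, a i * ∑ j, A i j * z j := by
  simp only [add_mul, Finset.sum_add_distrib, Finset.sum_mul, Finset.mul_sum]
  congr 1
  rw [Finset.sum_comm]
  apply Finset.sum_congr rfl; intro i _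
  apply Finset.sum_congr rfl; intro j _
  ring

/-- **Feasibility of the quadratic robust satisficing constraint above the nominal value.**
For every `υ > ‖a‖₂² + c` there exist `k ≥ 0` and `λ ≥ 0` (one may take `λ = 0`) making the
block matrix positive semidefinite; equivalently, for any `r > 0` there exists `k ≥ 0` with
`‖Az + a‖₂² + bᵀz + c ≤ k·zᵀz + υ` for all `z` with `‖z‖₂ ≤ r`. -/
theorem robust_quadratic_sdp_feasible {m n : ℕ}
    (A : Matrix (Fin m) (Fin n) ℝ) (a : Fin m → ℝ) (b : Fin n → ℝ)
    (c : ℝ) (r : ℝ) (hr : 0 < r) (υ : ℝ) (hυ : ∑ i, (a i) ^ 2 + c < υ) :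
    (∃ k : ℝ, 0 ≤ k ∧ ∃ lam : ℝ, 0 ≤ lam ∧ (quadBlockMat A a b c υ lam r k).PosSemidef) ∧
    (∃ k : ℝ, 0 ≤ k ∧ ∀ z : Fin n → ℝ, ∑ i, (z i) ^ 2 ≤ r ^ 2 →
        ∑ i, (A.mulVec z i + a i) ^ 2 + b ⬝ᵥ z + c ≤ k * (z ⬝ᵥ z) + υ) := by
  classical
  set ε : ℝ := υ - c - ∑ i, (a i) ^ 2 with hε_def
  set W : ℝ := ∑ j, (b j + 2 * ∑ i, a i * A i j) ^ 2 with hW_def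
  set Mc : ℝ := ∑ i, ∑ j, (A i j) ^ 2 with hMc_def
  set k : ℝ := W / (4 * ε) + Mc with hk_def
  have hε : 0 < ε := by rw [hε_def]; linarith
  have hW : 0 ≤ W := by rw [hW_def]; exact Finset.sum_nonneg fun j _ => sq_nonneg _
  have hMc : 0 ≤ Mc := by
    rw [hMc_def]
    exact Finset.sum_nonneg fun i _ => Finset.sum_nonneg fun j _ => sq_nonneg _
  have hk : 0 ≤ k := by
    rw [hk_def]
    have := div_nonneg hW (by linarith : (0:ℝ) ≤ 4 * ε)
    linarith
  -- the key inequality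
  have key : ∀ (t : ℝ) (z : Fin n → ℝ),
      0 ≤ t ^ 2 * ε - t * (∑ j, b j * z j + 2 * ∑ i, a i * ∑ j, A i j * z j)
          - ∑ i, (∑ j, A i j * z j) ^ 2 + k * ∑ j, z j ^ 2 := by
    intro t z
    have hZ : (0:ℝ) ≤ ∑ j, z j ^ 2 := Finset.sum_nonneg fun j _ => sq_nonneg _
    have hu : (∑ j, b j * z j + 2 * ∑ i, a i * ∑ j, A i j * z j) ^ 2
        ≤ W * ∑ j, z j ^ 2 := by
      rw [← w_sum A a b z, hW_def]
      exact Finset.sum_mul_sq_le_sq_mul_sq Finset.univ _ z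
    have hP : ∑ i, (∑ j, A i j * z j) ^ 2 ≤ Mc * ∑ j, z j ^ 2 := by
      calc ∑ i, (∑ j, A i j * z j) ^ 2
          ≤ ∑ i, (∑ j, (A i j) ^ 2) * ∑ j, z j ^ 2 :=
            Finset.sum_le_sum fun i _ => Finset.sum_mul_sq_le_sq_mul_sq Finset.univ _ z
        _ = Mc * ∑ j, z j ^ 2 := by rw [← Finset.sum_mul, hMc_def]
    have h4 : (0:ℝ) < 4 * ε := by linarith
    have hk4 : (4 * ε) * k = W + (4 * ε) * Mc := by
      rw [hk_def]; field_simp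
    have big : 0 ≤ (4 * ε) *
        (t ^ 2 * ε - t * (∑ j, b j * z j + 2 * ∑ i, a i * ∑ j, A i j * z j)
          - ∑ i, (∑ j, A i j * z j) ^ 2 + k * ∑ j, z j ^ 2) := by
      nlinarith [sq_nonneg (2 * ε * t - (∑ j, b j * z j + 2 * ∑ i, a i * ∑ j, A i j * z j)),
        hu, mul_le_mul_of_nonneg_left hP h4.le,
        mul_le_mul_of_nonneg_right hk4.le hZ, mul_le_mul_of_nonneg_right hk4.ge hZ]
    exact (mul_nonneg_iff_of_pos_left h4).mp big
  constructor
  · -- SDP feasibility with λ = 0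
    refine ⟨k, hk, 0, le_rfl, ?_, ?_⟩
    · -- Hermitian
      ext i j
      rcases i with i | u | i <;> rcases j with j | u | j <;>
        simp [quadBlockMat, Matrix.conjTranspose_apply, eq_comm]
    · intro v
      have hform : star v ⬝ᵥ (quadBlockMat A a b c υ 0 r k) *ᵥ v =
          (∑ i, v (Sum.inl i) * (v (Sum.inl i) + v (Sum.inr (Sum.inl ())) * a i
              + ∑ j, A i j * v (Sum.inr (Sum.inr j))))
          + v (Sum.inr (Sum.inl ())) * ((∑ i, a i * v (Sum.inl i))
              + (-c + υ) * v (Sum.inr (Sum.inl ()))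
              + ∑ j, -(1/2) * b j * v (Sum.inr (Sum.inr j)))
          + ∑ j, v (Sum.inr (Sum.inr j)) * ((∑ i, A i j * v (Sum.inl i))
              + -(1/2) * b j * v (Sum.inr (Sum.inl ())) + k * v (Sum.inr (Sum.inr j))) := by
        simp [quadBlockMat, dotProduct, mulVec, Fintype.sum_sum_type, Finset.mul_sum,
          Finset.sum_ite_eq, mul_comm]
        ring_nf
        congr 1
        · congr 1
          apply Finset.sum_congr rfl; intro i _; ring
        · apply Finset.sum_congr rfl; intro j _; ring
      set x : Fin m → ℝ := fun i => v (Sum.inl i) with hx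
      set t : ℝ := v (Sum.inr (Sum.inl ())) with ht
      set z : Fin n → ℝ := fun j => v (Sum.inr (Sum.inr j)) with hz
      have hdecomp : star v ⬝ᵥ (quadBlockMat A a b c υ 0 r k) *ᵥ v =
          ∑ i, (x i + t * a i + ∑ j, A i j * z j) ^ 2
          + (t ^ 2 * ε - t * (∑ j, b j * z j + 2 * ∑ i, a i * ∑ j, A i j * z j)
              - ∑ i, (∑ j, A i j * z j) ^ 2 + k * ∑ j, z j ^ 2) := by
        rw [hform, expand_sq_sum m x a (fun i => ∑ j, A i j * z j) t,
          split3 m x a (fun i => ∑ j, A i j * z j) t,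
          split_z n z b (fun j => ∑ i, A i j * x i) t k,
          cross_sum A x z, neg_half_sum n b z, hε_def]
        ring
      have hsum : (v.sum fun i xi => v.sum fun j xj =>
          star xi * quadBlockMat A a b c υ 0 r k i j * xj) =
          star ⇑v ⬝ᵥ (quadBlockMat A a b c υ 0 r k) *ᵥ ⇑v := by
        simp [Finsupp.sum_fintype, dotProduct, mulVec, Finset.mul_sum, mul_assoc, mul_add]
      rw [hsum, hdecomp]
      exact add_nonneg (Finset.sum_nonneg fun i _ => sq_nonneg _) (key t z)
  · -- explicit inequality
    refine ⟨k, hk, ?_⟩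
    intro z _
    have h := key 1 z
    have hmv : ∀ i, A.mulVec z i = ∑ j, A i j * z j := by
      intro i; simp [Matrix.mulVec, dotProduct]
    have hbz : b ⬝ᵥ z = ∑ j, b j * z j := rfl
    have hzz : z ⬝ᵥ z = ∑ j, z j ^ 2 := by
      simp only [dotProduct]
      apply Finset.sum_congr rfl; intro j _; ring
    have hexp : ∑ i, (A.mulVec z i + a i) ^ 2
        = ∑ i, (∑ j, A i j * z j) ^ 2 + 2 * (∑ i, a i * ∑ j, A i j * z j)
          + ∑ i, (a i) ^ 2 := by
      simp only [hmv]
      exact expand_sq_sum' m a (fun i => ∑ j, A i j * z j)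
    rw [hbz, hzz, hexp]
    have hεe : ε = υ - c - ∑ i, (a i) ^ 2 := hε_def
    nlinarith [h]
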